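/- Let (A,I) be a finite independence alphabet and let φ be an endomorphism of the trace monoid M(A,I) satisfying: for all letters a,b,c ∈ A, if c is a prefix of φ(b) and c ∼_I φ(a), then (a,b) ∈ I. Then r(φ(u),φ(v)) ≥ r(u,v) for all u,v ∈ M(A,I), where r measures the length of the longest common prefix of Foata normal forms. -/

import Mathlib

/-- The defining relation of the trace monoid: `ab = ba` whenever `(a,b) ∈ I`. -/
def traceRel (A : Type) (I : A → A → Prop) : FreeMonoid A → FreeMonoid A → Prop :=
  fun x y => ∃ a b : A, I a b ∧ x = FreeMonoid.of a * FreeMonoid.of b ∧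
    y = FreeMonoid.of b * FreeMonoid.of a

/-- The congruence on the free monoid generated by the trace relations. -/
def traceCon (A : Type) (I : A → A → Prop) : Con (FreeMonoid A) :=
  conGen (traceRel A I)

/-- The trace monoid `M(A,I)`, the quotient of the free monoid on `A` by the
congruence generated by `{(ab, ba) : (a,b) ∈ I}`. -/
abbrev TraceMonoid (A : Type) (I : A → A → Prop) := (traceCon A I).Quotient



/-- The image in the trace monoid of a letter `a ∈ A`. -/
def traceOf (A : Type) (I : A → A → Prop) (a : A) : TraceMonoid A I :=
  (traceCon A I).mk' (FreeMonoid.of a)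

/-- The set of letters which are periodic points of the endomorphism `φ`. -/
def perLetters (A : Type) (I : A → A → Prop) (φ : Monoid.End (TraceMonoid A I)) : Set A :=
  {a : A | ∃ n : ℕ, 1 ≤ n ∧ (φ ^ n) (traceOf A I a) = traceOf A I a}

/-- A clique of the independence graph: a nonempty set of letters that pairwise
commute (are pairwise independent). -/
def IsClique (A : Type) (I : A → A → Prop) (B : Finset A) : Prop :=
  B.Nonempty ∧ ∀ a ∈ B, ∀ b ∈ B, a ≠ b → I a b

/-- `w_B`: the product in the trace monoid of all letters of `B`. -/
noncomputable def wB (A : Type) (I : A → A → Prop) (B : Finset A) : TraceMonoid A I :=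
  (B.toList.map (traceOf A I)).prod

/-- The product `w_{B₁} ⋯ w_{B_k}` associated with a list of cliques. -/
noncomputable def wProd (A : Type) (I : A → A → Prop) (L : List (Finset A)) :
    TraceMonoid A I :=
  (L.map (wB A I)).prod

/-- A list `[B₁, …, B_k]` is a Foata chain if each `B_i` is a clique and, for every
`i ≥ 2` and every `a ∈ B_i`, there is some `b ∈ B_{i-1}` with `(a,b) ∉ I`. -/
def IsFoataChain (A : Type) (I : A → A → Prop) (L : List (Finset A)) : Prop :=
  (∀ B ∈ L, IsClique A I B) ∧
    ∀ i : ℕ, (hi : i + 1 < L.length) →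
      ∀ a ∈ L[i + 1], ∃ b ∈ L[i], ¬ I a b

/-- `[B₁, …, B_k]` is the Foata normal form of `u` if it is a Foata chain whose
product is `u`. (Such a list exists and is unique for every `u`.) -/
def IsFNF (A : Type) (I : A → A → Prop) (L : List (Finset A)) (u : TraceMonoid A I) :
    Prop :=
  IsFoataChain A I L ∧ u = wProd A I L

/-- For `u ≠ v`, `rNat u v` is the largest `k` such that the Foata normal forms of
`u` and `v` have the same first `k` components. -/
noncomputable def rNat (A : Type) (I : A → A → Prop) (u v : TraceMonoid A I) : ℕ :=
  sSup {k : ℕ | ∃ P Lu Lv : List (Finset A), P.length = k ∧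
    IsFNF A I (P ++ Lu) u ∧ IsFNF A I (P ++ Lv) v}

open Classical

/-- `r(u,v) ∈ ℕ ∪ {∞}`: the length of the longest common prefix of the Foata normal
forms of `u` and `v`, with `r(u,u) = ∞`. -/
noncomputable def rE (A : Type) (I : A → A → Prop) (u v : TraceMonoid A I) : ℕ∞ :=
  if u = v then ⊤ else (rNat A I u v : ℕ∞)

/-- The Foata normal form metric: `d(u,v) = 2^{-r(u,v)}`, with `2^{-∞} = 0`. -/
noncomputable def dFNF (A : Type) (I : A → A → Prop) (u v : TraceMonoid A I) : ℝ :=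
  if u = v then 0 else (2 : ℝ) ^ (-(rNat A I u v : ℤ))

/-- The content of a trace: the set of letters occurring in (any representative of) it. -/
def content (A : Type) (I : A → A → Prop) (u : TraceMonoid A I) : Set A :=
  {a : A | ∃ w : FreeMonoid A, (traceCon A I).mk' w = u ∧ a ∈ FreeMonoid.toList w}

namespace TraceAux

open FreeMonoid

variable {A : Type} {I : A → A → Prop}

/-- Shorthand for the quotient map. -/
abbrev mk (A : Type) (I : A → A → Prop) : FreeMonoid A →* TraceMonoid A I := (traceCon A I).mk'

lemma mk_eq_iff {w w' : FreeMonoid A} :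
    mk A I w = mk A I w' ↔ ConGen.Rel (traceRel A I) w w' :=
  Con.eq _

lemma rel_length {w w' : FreeMonoid A} (h : ConGen.Rel (traceRel A I) w w') :
    w.toList.length = w'.toList.length := by
  induction h with
  | of x y hxy => obtain ⟨a, b, _, rfl, rfl⟩ := hxy; simp
  | refl => rfl
  | symm _ ih => omega
  | trans _ _ ih1 ih2 => omega
  | mul _ _ ih1 ih2 => simp only [toList_mul, List.length_append, ih1, ih2]

lemma rel_mem {w w' : FreeMonoid A} (h : ConGen.Rel (traceRel A I) w w') (a : A) :
    a ∈ w.toList ↔ a ∈ w'.toList := by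
  induction h with
  | of x y hxy =>
      obtain ⟨b, c, _, rfl, rfl⟩ := hxy
      simp only [toList_mul, List.mem_append, toList_of, List.mem_singleton]; tauto
  | refl => exact Iff.rfl
  | symm _ ih => exact ih.symm
  | trans _ _ ih1 ih2 => exact ih1.trans ih2
  | mul _ _ ih1 ih2 => simp only [toList_mul, List.mem_append, ih1, ih2]

/-- Length of a trace. -/
noncomputable def tlen (x : TraceMonoid A I) : ℕ :=
  Con.liftOn x (fun w => w.toList.length) (fun _ _ h => rel_length h)

lemma tlen_mk (w : FreeMonoid A) : tlen (mk A I w) = w.toList.length := rfl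

lemma tlen_mul (x y : TraceMonoid A I) : tlen (x * y) = tlen x + tlen y := by
  obtain ⟨w, rfl⟩ := Con.mk'_surjective (c := traceCon A I) x
  obtain ⟨w', rfl⟩ := Con.mk'_surjective (c := traceCon A I) y
  rw [← map_mul]
  show (w * w').toList.length = w.toList.length + w'.toList.length
  rw [toList_mul, List.length_append]

lemma tlen_one : tlen (1 : TraceMonoid A I) = 0 := rfl

lemma tlen_of (a : A) : tlen (traceOf A I a) = 1 := rfl

lemma traceOf_eq (a : A) : traceOf A I a = mk A I (of a) := rfl

lemma eq_one_of_tlen {x : TraceMonoid A I} (h : tlen x = 0) : x = 1 := by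
  obtain ⟨w, rfl⟩ := Con.mk'_surjective (c := traceCon A I) x
  have h0 : w.toList = [] := List.length_eq_zero_iff.mp h
  have hw : w = 1 := by
    have := congrArg ofList h0
    simpa using this
  rw [hw, map_one]

lemma content_mk (w : FreeMonoid A) : content A I (mk A I w) = {a | a ∈ w.toList} := by
  ext a
  constructor
  · rintro ⟨w', hw, ha⟩
    exact (rel_mem (mk_eq_iff.mp hw) a).mp ha
  · intro ha
    exact ⟨w, rfl, ha⟩

lemma content_mul (x y : TraceMonoid A I) :
    content A I (x * y) = content A I x ∪ content A I y := by
  obtain ⟨w, rfl⟩ := Con.mk'_surjective (c := traceCon A I) x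
  obtain ⟨w', rfl⟩ := Con.mk'_surjective (c := traceCon A I) y
  rw [← map_mul]
  ext a
  simp only [content_mk, Set.mem_setOf_eq, toList_mul, List.mem_append, Set.mem_union]

lemma content_of (a : A) : content A I (traceOf A I a) = {a} := by
  rw [traceOf_eq, content_mk]
  ext b; simp

lemma content_one : content A I (1 : TraceMonoid A I) = ∅ := by
  rw [show (1 : TraceMonoid A I) = mk A I 1 from (map_one _).symm, content_mk]
  ext a; simp [toList_one]

lemma swap {a b : A} (h : I a b) :
    traceOf A I a * traceOf A I b = traceOf A I b * traceOf A I a := by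
  rw [traceOf_eq, traceOf_eq, ← map_mul, ← map_mul]
  exact mk_eq_iff.mpr (ConGen.Rel.of _ _ ⟨a, b, h, rfl, rfl⟩)

/-- The set of minimal letters (one-letter prefixes) of a trace. -/
def minL (x : TraceMonoid A I) : Set A := {a | ∃ y, x = traceOf A I a * y}

lemma minL_one : minL (1 : TraceMonoid A I) = ∅ := by
  ext a
  simp only [minL, Set.mem_setOf_eq, Set.mem_empty_iff_false, iff_false]
  rintro ⟨y, hy⟩
  have := congrArg tlen hy
  rw [tlen_one, tlen_mul, tlen_of] at this
  omega

lemma minL_subset_content {x : TraceMonoid A I} : minL x ⊆ content A I x := by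
  rintro a ⟨y, rfl⟩
  rw [content_mul, content_of]
  exact Or.inl rfl

lemma mk_cons (c : A) (l : List A) :
    mk A I (ofList (c :: l)) = traceOf A I c * mk A I (ofList l) := by
  rw [ofList_cons, map_mul, traceOf_eq]

lemma minL_nonempty {x : TraceMonoid A I} (h : x ≠ 1) : (minL x).Nonempty := by
  obtain ⟨w, rfl⟩ := Con.mk'_surjective (c := traceCon A I) x
  rcases hl : w.toList with _ | ⟨c, l⟩
  · exact absurd (eq_one_of_tlen (by rw [tlen_mk, hl]; rfl)) h
  · refine ⟨c, mk A I (ofList l), ?_⟩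
    have hw : w = ofList (c :: l) := by
      have := congrArg ofList hl
      simpa using this
    rw [show (mk A I) w = mk A I (ofList (c :: l)) from by rw [← hw], mk_cons]

lemma minL_mul_left {x y : TraceMonoid A I} : minL x ⊆ minL (x * y) := by
  rintro a ⟨x', rfl⟩
  exact ⟨x' * y, by rw [mul_assoc]⟩

lemma commute_content {a : A} {x : TraceMonoid A I}
    (h : ∀ c ∈ content A I x, I a c) :
    traceOf A I a * x = x * traceOf A I a := by
  obtain ⟨w, rfl⟩ := Con.mk'_surjective (c := traceCon A I) x
  induction w using FreeMonoid.recOn with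
  | one => rw [map_one, one_mul, mul_one]
  | of_mul c w' ih =>
    rw [map_mul, ← traceOf_eq] at h ⊢
    have hac : I a c := h c (by rw [content_mul, content_of]; exact Or.inl rfl)
    have h' : ∀ d ∈ content A I (mk A I w'), I a d := fun d hd =>
      h d (by rw [content_mul]; exact Or.inr hd)
    rw [← mul_assoc, swap hac, mul_assoc, ih h', ← mul_assoc]

lemma minL_mul_right {a : A} {x y : TraceMonoid A I}
    (ha : a ∈ minL y) (h : ∀ c ∈ content A I x, I a c) : a ∈ minL (x * y) := by
  obtain ⟨y', rfl⟩ := ha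
  exact ⟨x * y', by rw [← mul_assoc, ← commute_content h, mul_assoc]⟩

end TraceAux

open FreeMonoid in
open Classical in
/-- Delete the first occurrence of `a` from `w`, provided all letters before it are
independent of `a`; otherwise return `none`. -/
noncomputable def del {A : Type} (I : A → A → Prop) (a : A) : List A → Option (List A)
  | [] => none
  | c :: w => if c = a then some w else if I a c then (del I a w).map (c :: ·) else none

namespace TraceAux

open FreeMonoid

variable {A : Type} {I : A → A → Prop}

lemma del_nil (a : A) : del I a [] = none := rfl

open Classical in
lemma del_cons (a c : A) (w : List A) :
    del I a (c :: w) =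
      if c = a then some w else if I a c then (del I a w).map (c :: ·) else none := by
  rfl

lemma del_some_sound {a : A} : ∀ {w r : List A}, del I a w = some r →
    mk A I (ofList w) = traceOf A I a * mk A I (ofList r) := by
  intro w
  induction w with
  | nil => intro r h; simp [del_nil] at h
  | cons c w ih =>
    intro r h
    rw [del_cons] at h
    by_cases hca : c = a
    · rw [if_pos hca] at h
      obtain rfl : w = r := by simpa using h
      rw [hca, mk_cons]
    · rw [if_neg hca] at h
      by_cases hic : I a c
      · rw [if_pos hic] at h
        obtain ⟨r', hr', rfl⟩ := Option.map_eq_some_iff.mp h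
        rw [mk_cons, ih hr', mk_cons, ← mul_assoc, ← swap hic, mul_assoc]
      · rw [if_neg hic] at h; simp at h

lemma del_append_some {a : A} : ∀ {w₁ : List A} {r : List A} (w₂ : List A),
    del I a w₁ = some r → del I a (w₁ ++ w₂) = some (r ++ w₂) := by
  intro w₁
  induction w₁ with
  | nil => intro r w₂ h; simp [del_nil] at h
  | cons c w ih =>
    intro r w₂ h
    rw [del_cons] at h
    rw [List.cons_append, del_cons]
    by_cases hca : c = a
    · rw [if_pos hca] at h ⊢
      obtain rfl : w = r := by simpa using h
      rfl
    · rw [if_neg hca] at h ⊢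
      by_cases hic : I a c
      · rw [if_pos hic] at h ⊢
        obtain ⟨r', hr', rfl⟩ := Option.map_eq_some_iff.mp h
        rw [ih w₂ hr']
        rfl
      · rw [if_neg hic] at h; simp at h

lemma del_append_none_comm {a : A} : ∀ {w₁ : List A} (w₂ : List A),
    del I a w₁ = none → (∀ c ∈ w₁, I a c) →
    del I a (w₁ ++ w₂) = (del I a w₂).map (w₁ ++ ·) := by
  intro w₁
  induction w₁ with
  | nil =>
    intro w₂ _ _
    simp only [List.nil_append]
    cases del I a w₂ <;> rfl
  | cons c w ih =>
    intro w₂ h hc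
    rw [del_cons] at h
    have hca : ¬ c = a := by
      intro hh; rw [if_pos hh] at h; exact nomatch h
    rw [if_neg hca] at h
    have hic : I a c := hc c (List.mem_cons_self)
    rw [if_pos hic] at h
    have hw : del I a w = none := by
      cases hd : del I a w with
      | none => rfl
      | some r => rw [hd] at h; simp at h
    rw [List.cons_append, del_cons, if_neg hca, if_pos hic,
      ih w₂ hw (fun d hd => hc d (List.mem_cons_of_mem _ hd))]
    cases del I a w₂ <;> rfl

lemma del_append_none_block {a : A} : ∀ {w₁ : List A} (w₂ : List A),
    del I a w₁ = none → ¬ (∀ c ∈ w₁, I a c) →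
    del I a (w₁ ++ w₂) = none := by
  intro w₁
  induction w₁ with
  | nil => intro w₂ _ hc; exact absurd (by simp) hc
  | cons c w ih =>
    intro w₂ h hc
    rw [del_cons] at h
    have hca : ¬ c = a := by
      intro hh; rw [if_pos hh] at h; exact nomatch h
    rw [if_neg hca] at h
    rw [List.cons_append, del_cons, if_neg hca]
    by_cases hic : I a c
    · rw [if_pos hic] at h
      rw [if_pos hic]
      have hw : del I a w = none := by
        cases hd : del I a w with
        | none => rfl
        | some r => rw [hd] at h; simp at h
      have hcw : ¬ ∀ d ∈ w, I a d := fun hh =>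
        hc (fun d hd => by
          rcases List.mem_cons.mp hd with rfl | hd
          · exact hic
          · exact hh d hd)
      rw [ih w₂ hw hcw]
      rfl
    · rw [if_neg hic]

/-- `del` composed with the projection to the trace monoid. -/
noncomputable def delT (A : Type) (I : A → A → Prop) (a : A) (w : FreeMonoid A) :
    Option (TraceMonoid A I) :=
  (del I a w.toList).map (fun r => mk A I (ofList r))

lemma delT_of_rel (hsym : Symmetric I) (hirr : Irreflexive I) {w w' : FreeMonoid A}
    (h : ConGen.Rel (traceRel A I) w w') (a : A) : delT A I a w = delT A I a w' := by
  induction h with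
  | of x y hxy =>
    obtain ⟨b, c, hI, rfl, rfl⟩ := hxy
    have hbc : b ≠ c := fun h => hirr b (h ▸ hI)
    unfold delT
    have h1 : (of b * of c : FreeMonoid A).toList = [b, c] := rfl
    have h2 : (of c * of b : FreeMonoid A).toList = [c, b] := rfl
    rw [h1, h2]
    by_cases hab : b = a
    · subst hab
      have L : del I b [b, c] = some [c] := by rw [del_cons, if_pos rfl]
      have R : del I b [c, b] = some [c] := by
        rw [del_cons, if_neg (fun h => hbc h.symm), if_pos hI, del_cons, if_pos rfl]
        rfl
      rw [L, R]
    · by_cases hac : c = a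
      · subst hac
        have L : del I c [b, c] = some [b] := by
          rw [del_cons, if_neg hbc, if_pos (hsym hI), del_cons, if_pos rfl]
          rfl
        have R : del I c [c, b] = some [b] := by rw [del_cons, if_pos rfl]
        rw [L, R]
      · have L : del I a [b, c] = none := by
          rw [del_cons, if_neg hab, del_cons, if_neg hac, del_nil]
          by_cases h3 : I a b <;> by_cases h4 : I a c <;> simp [h3, h4]
        have R : del I a [c, b] = none := by
          rw [del_cons, if_neg hac, del_cons, if_neg hab, del_nil]
          by_cases h3 : I a b <;> by_cases h4 : I a c <;> simp [h3, h4]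
        rw [L, R]
  | refl => rfl
  | symm _ ih => exact ih.symm
  | trans _ _ ih1 ih2 => exact ih1.trans ih2
  | @mul w₁ x₁ y₁ z₁ h1 h2 ih1 ih2 =>
    have hmk : mk A I w₁ = mk A I x₁ := mk_eq_iff.mpr h1
    have hmem : ∀ b, b ∈ w₁.toList ↔ b ∈ x₁.toList := rel_mem h1
    have hy : mk A I y₁ = mk A I z₁ := mk_eq_iff.mpr h2
    unfold delT at *
    rw [toList_mul, toList_mul]
    cases hd : del I a w₁.toList with
    | some r =>
      rw [hd] at ih1
      cases hd' : del I a x₁.toList with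
      | none => rw [hd'] at ih1; simp at ih1
      | some r' =>
        rw [hd'] at ih1
        simp only [Option.map_some] at ih1
        have hrr : mk A I (ofList r) = mk A I (ofList r') := by simpa using ih1
        rw [del_append_some _ hd, del_append_some _ hd']
        simp only [Option.map_some, Option.some.injEq]
        rw [ofList_append, ofList_append, map_mul, map_mul, hrr,
          show mk A I (ofList y₁.toList) = mk A I y₁ by rw [ofList_toList],
          show mk A I (ofList z₁.toList) = mk A I z₁ by rw [ofList_toList], hy]
    | none =>
      rw [hd] at ih1
      have hd' : del I a x₁.toList = none := by
        cases hdd : del I a x₁.toList with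
        | none => rfl
        | some r' => rw [hdd] at ih1; simp at ih1
      by_cases hc : ∀ c ∈ w₁.toList, I a c
      · have hc' : ∀ c ∈ x₁.toList, I a c := fun c h => hc c ((hmem c).mpr h)
        rw [del_append_none_comm _ hd hc, del_append_none_comm _ hd' hc']
        cases he : del I a y₁.toList with
        | none =>
          have he' : del I a z₁.toList = none := by
            rw [he] at ih2
            cases hee : del I a z₁.toList with
            | none => rfl
            | some s => rw [hee] at ih2; simp at ih2
          rw [he']
          rfl
        | some s =>
          rw [he] at ih2
          cases hee : del I a z₁.toList with
          | none => rw [hee] at ih2; simp at ih2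
          | some s' =>
            rw [hee] at ih2
            simp only [Option.map_some] at ih2 ⊢
            have hss : mk A I (ofList s) = mk A I (ofList s') := by simpa using ih2
            rw [ofList_append, ofList_append, map_mul, map_mul, hss,
              show mk A I (ofList w₁.toList) = mk A I w₁ by rw [ofList_toList],
              show mk A I (ofList x₁.toList) = mk A I x₁ by rw [ofList_toList], hmk]
      · have hc' : ¬ ∀ c ∈ x₁.toList, I a c := fun hh => hc (fun c h => hh c ((hmem c).mp h))
        rw [del_append_none_block _ hd hc, del_append_none_block _ hd' hc']

lemma key_split (hsym : Symmetric I) (hirr : Irreflexive I) {a c : A}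
    {z y : TraceMonoid A I} (h : traceOf A I c * z = traceOf A I a * y) (hne : a ≠ c) :
    I a c ∧ a ∈ minL z := by
  obtain ⟨z₀, rfl⟩ := Con.mk'_surjective (c := traceCon A I) z
  obtain ⟨y₀, rfl⟩ := Con.mk'_surjective (c := traceCon A I) y
  rw [traceOf_eq, traceOf_eq, ← map_mul, ← map_mul] at h
  have hdel := delT_of_rel hsym hirr (mk_eq_iff.mp h) a
  unfold delT at hdel
  rw [toList_mul, toList_mul, toList_of, toList_of] at hdel
  have h2 : del I a ([a] ++ y₀.toList) = some y₀.toList := by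
    rw [show [a] ++ y₀.toList = a :: y₀.toList from rfl, del_cons, if_pos rfl]
  rw [h2, show [c] ++ z₀.toList = c :: z₀.toList from rfl, del_cons,
    if_neg (fun hh => hne hh.symm)] at hdel
  by_cases hic : I a c
  · refine ⟨hic, ?_⟩
    rw [if_pos hic] at hdel
    cases hdz : del I a z₀.toList with
    | none => rw [hdz] at hdel; simp at hdel
    | some r =>
      refine ⟨mk A I (ofList r), ?_⟩
      have := del_some_sound hdz
      rwa [ofList_toList] at this
  · rw [if_neg hic] at hdel; simp at hdel

lemma minL_cons (hsym : Symmetric I) (hirr : Irreflexive I) {a c : A} {z : TraceMonoid A I}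
    (h : a ∈ minL (traceOf A I c * z)) : a = c ∨ (I a c ∧ a ∈ minL z) := by
  by_cases hac : a = c
  · exact Or.inl hac
  · obtain ⟨y, hy⟩ := h
    exact Or.inr (key_split hsym hirr hy hac)

lemma minL_clique (hsym : Symmetric I) (hirr : Irreflexive I) {a b : A}
    {x : TraceMonoid A I} (ha : a ∈ minL x) (hb : b ∈ minL x) (hne : a ≠ b) : I a b := by
  obtain ⟨y, rfl⟩ := hb
  rcases minL_cons hsym hirr ha with h | h
  · exact absurd h hne
  · exact h.1

lemma minL_mul_word (hsym : Symmetric I) (hirr : Irreflexive I) :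
    ∀ (l : List A) (y : TraceMonoid A I) (a : A),
      a ∈ minL (mk A I (ofList l) * y) →
      a ∈ minL (mk A I (ofList l)) ∨ (a ∈ minL y ∧ ∀ c ∈ content A I (mk A I (ofList l)), I a c) := by
  intro l
  induction l with
  | nil =>
    intro y a h
    rw [ofList_nil, map_one, one_mul] at h
    rw [ofList_nil, map_one]
    exact Or.inr ⟨h, by rw [content_one]; simp⟩
  | cons c l ih =>
    intro y a h
    rw [mk_cons, mul_assoc] at h
    by_cases hac : a = c
    · subst hac
      exact Or.inl ⟨mk A I (ofList l), mk_cons a l⟩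
    · rcases minL_cons hsym hirr h with h' | ⟨hIac, h'⟩
      · exact absurd h' hac
      · rcases ih y a h' with h'' | ⟨h1, h2⟩
        · left
          rw [mk_cons]
          exact minL_mul_right h''
            (by rw [content_of]; rintro d rfl; exact hIac)
        · right
          refine ⟨h1, ?_⟩
          intro d hd
          rw [mk_cons, content_mul, content_of] at hd
          rcases hd with rfl | hd
          · exact hIac
          · exact h2 d hd

lemma minL_mul (hsym : Symmetric I) (hirr : Irreflexive I) {x y : TraceMonoid A I} {a : A}
    (h : a ∈ minL (x * y)) :
    a ∈ minL x ∨ (a ∈ minL y ∧ ∀ c ∈ content A I x, I a c) := by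
  obtain ⟨w, rfl⟩ := Con.mk'_surjective (c := traceCon A I) x
  have hw : mk A I (ofList w.toList) = mk A I w := by rw [ofList_toList]
  rw [← hw] at h ⊢
  exact minL_mul_word hsym hirr w.toList y a h

end TraceAux

namespace TraceAux

open FreeMonoid

variable {A : Type} {I : A → A → Prop}

lemma content_listProd (l : List A) :
    content A I ((l.map (traceOf A I)).prod) = {a | a ∈ l} := by
  induction l with
  | nil =>
    rw [List.map_nil, List.prod_nil, content_one]
    ext a; simp
  | cons c l ih =>
    rw [List.map_cons, List.prod_cons, content_mul, content_of, ih]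
    ext a; simp

lemma content_wB (B : Finset A) : content A I (wB A I B) = ↑B := by
  rw [wB, content_listProd]
  ext a; simp [Finset.mem_toList]

lemma tlen_listProd (l : List A) : tlen ((l.map (traceOf A I)).prod) = l.length := by
  induction l with
  | nil => rw [List.map_nil, List.prod_nil, tlen_one, List.length_nil]
  | cons c l ih =>
    rw [List.map_cons, List.prod_cons, tlen_mul, tlen_of, ih, List.length_cons]
    omega

lemma tlen_wB (B : Finset A) : tlen (wB A I B) = B.card := by
  rw [wB, tlen_listProd, Finset.length_toList]

lemma pairwise_commute_toList {B : Finset A}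
    (hB : ∀ x ∈ B, ∀ y ∈ B, x ≠ y → I x y) :
    (B.toList.map (traceOf A I)).Pairwise Commute := by
  rw [List.pairwise_map]
  refine List.Pairwise.imp_of_mem ?_ B.nodup_toList
  intro x y hx hy hne
  exact swap (hB x (Finset.mem_toList.mp hx) y (Finset.mem_toList.mp hy) hne)

lemma wB_erase [DecidableEq A] {B : Finset A} {a : A}
    (hB : ∀ x ∈ B, ∀ y ∈ B, x ≠ y → I x y) (ha : a ∈ B) :
    wB A I B = traceOf A I a * wB A I (B.erase a) := by
  have hnot : a ∉ B.erase a := Finset.notMem_erase a B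
  have hBi : insert a (B.erase a) = B := Finset.insert_erase ha
  have hperm : B.toList.Perm (a :: (B.erase a).toList) := by
    have := Finset.toList_insert hnot
    rwa [hBi] at this
  have := List.Perm.prod_eq' (hperm.map (traceOf A I)) (pairwise_commute_toList hB)
  rw [wB, this, List.map_cons, List.prod_cons, wB]

lemma mem_minL_wB {B : Finset A} {a : A}
    (hB : ∀ x ∈ B, ∀ y ∈ B, x ≠ y → I x y) (ha : a ∈ B) : a ∈ minL (wB A I B) := by
  classical
  exact ⟨wB A I (B.erase a), wB_erase hB ha⟩

lemma clique_prefix (hsym : Symmetric I) (hirr : Irreflexive I) :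
    ∀ (n : ℕ) (D : Finset A) (x : TraceMonoid A I), D.card = n → ↑D ⊆ minL x →
      ∃ x', x = wB A I D * x' := by
  classical
  intro n
  induction n with
  | zero =>
    intro D x hcard _
    have : D = ∅ := Finset.card_eq_zero.mp hcard
    subst this
    refine ⟨x, ?_⟩
    rw [wB, Finset.toList_empty, List.map_nil, List.prod_nil, one_mul]
  | succ n ih =>
    intro D x hcard hD
    have hne : D.Nonempty := Finset.card_pos.mp (by omega)
    obtain ⟨a, ha⟩ := hne
    obtain ⟨y, rfl⟩ := hD (Finset.mem_coe.mpr ha)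
    have herase : ↑(D.erase a) ⊆ minL y := by
      intro b hb
      have hbD : b ∈ D := Finset.mem_of_mem_erase hb
      have hba : b ≠ a := Finset.ne_of_mem_erase hb
      rcases minL_cons hsym hirr (hD (Finset.mem_coe.mpr hbD)) with h | h
      · exact absurd h hba
      · exact h.2
    obtain ⟨x', rfl⟩ := ih (D.erase a) y (by rw [Finset.card_erase_of_mem ha]; omega) herase
    refine ⟨x', ?_⟩
    have hpair : ∀ x ∈ D, ∀ y ∈ D, x ≠ y → I x y := fun u hu v hv huv =>
      minL_clique hsym hirr (hD hu) (hD hv) huv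
    rw [← mul_assoc, ← wB_erase hpair ha]

lemma chain_nil : IsFoataChain A I [] :=
  ⟨by simp, by intro i hi; simp at hi⟩

lemma chain_of_append_left {P L : List (Finset A)} (h : IsFoataChain A I (P ++ L)) :
    IsFoataChain A I P := by
  refine ⟨fun B hB => h.1 B (List.mem_append_left _ hB), ?_⟩
  intro i hi a ha
  have hi' : i + 1 < (P ++ L).length := by
    rw [List.length_append]; omega
  have e1 : (P ++ L)[i + 1] = P[i + 1] := List.getElem_append_left hi
  have e2 : (P ++ L)[i] = P[i]'(by omega) := List.getElem_append_left (by omega)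
  have := h.2 i hi' a (by rw [e1]; exact ha)
  rwa [e2] at this

lemma chain_tail {B : Finset A} {L : List (Finset A)} (h : IsFoataChain A I (B :: L)) :
    IsFoataChain A I L := by
  refine ⟨fun C hC => h.1 C (List.mem_cons_of_mem _ hC), ?_⟩
  intro i hi a ha
  have hi' : i + 1 + 1 < (B :: L).length := by simp; omega
  have := h.2 (i + 1) hi' a (by simpa using ha)
  simpa using this

lemma chain_of_append_right {P L : List (Finset A)} (h : IsFoataChain A I (P ++ L)) :
    IsFoataChain A I L := by
  induction P with
  | nil => exact h
  | cons B P ih => exact ih (chain_tail h)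

lemma wProd_nil : wProd A I [] = 1 := rfl

lemma wProd_cons (B : Finset A) (L : List (Finset A)) :
    wProd A I (B :: L) = wB A I B * wProd A I L := by
  rw [wProd, List.map_cons, List.prod_cons, wProd]

lemma wProd_append (P L : List (Finset A)) :
    wProd A I (P ++ L) = wProd A I P * wProd A I L := by
  rw [wProd, List.map_append, List.prod_append, wProd, wProd]

lemma fnf_length_le {L : List (Finset A)} {x : TraceMonoid A I} (h : IsFNF A I L x) :
    L.length ≤ tlen x := by
  rw [h.2]
  have hcl := h.1.1
  clear h
  induction L with
  | nil => simp
  | cons B L ih =>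
    rw [wProd_cons, tlen_mul, tlen_wB, List.length_cons]
    have h1 : 1 ≤ B.card := Finset.card_pos.mpr (hcl B (List.mem_cons_self)).1
    have h2 := ih (fun C hC => hcl C (List.mem_cons_of_mem _ hC))
    omega

/-- `s` is blocked by the last clique of `L` (trivially true when `L = []`). -/
def Blocked (I : A → A → Prop) (L : List (Finset A)) (s : TraceMonoid A I) : Prop :=
  ∀ B, L.getLast? = some B → ∀ a ∈ minL s, ∃ b ∈ B, ¬ I a b

lemma minL_chain_mul (hsym : Symmetric I) (hirr : Irreflexive I) :
    ∀ (L : List (Finset A)) (s : TraceMonoid A I) (C : Finset A) (L'' : List (Finset A)),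
      L = C :: L'' → IsFoataChain A I L → Blocked I L s →
      minL (wProd A I L * s) = ↑C := by
  intro L
  induction L with
  | nil => intro s C L'' h; exact absurd h (by simp)
  | cons B L' ih =>
    intro s C L'' hEq hchain hblk
    obtain ⟨rfl, rfl⟩ : C = B ∧ L'' = L' := by
      injection hEq with h1 h2; exact ⟨h1.symm, h2.symm⟩
    have hpair : ∀ x ∈ C, ∀ y ∈ C, x ≠ y → I x y :=
      (hchain.1 C (List.mem_cons_self)).2
    rw [wProd_cons, mul_assoc]
    apply Set.eq_of_subset_of_subset
    · intro a hmem
      rcases minL_mul hsym hirr hmem with h | ⟨hmin, hcomm⟩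
      · have := minL_subset_content h
        rwa [content_wB] at this
      · rw [content_wB] at hcomm
        exfalso
        cases L'' with
        | nil =>
          rw [wProd_nil, one_mul] at hmin
          obtain ⟨b, hb, hnb⟩ := hblk C rfl a hmin
          exact hnb (hcomm b hb)
        | cons C' L₂ =>
          have hmin' : a ∈ (↑C' : Set A) := by
            rw [← ih s C' L₂ rfl (chain_tail hchain)
              (fun B' hB' a' ha' => hblk B' (by rw [List.getLast?_cons_cons]; exact hB') a' ha')]
            exact hmin
          obtain ⟨b, hb, hnb⟩ := hchain.2 0 (by simp) a (by simpa using hmin')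
          exact hnb (hcomm b (by simpa using hb))
    · intro a ha
      exact minL_mul_left (mem_minL_wB hpair ha)

lemma fnf_head_subset_minL {C : Finset A} {R : List (Finset A)} {x : TraceMonoid A I}
    (h : IsFNF A I (C :: R) x) : (↑C : Set A) ⊆ minL x := by
  intro a ha
  rw [h.2, wProd_cons]
  exact minL_mul_left (mem_minL_wB (h.1.1 C (List.mem_cons_self)).2 ha)

lemma cons_fnf {D : Finset A} {R : List (Finset A)} {x : TraceMonoid A I}
    (hx : IsFNF A I R x) (hD : IsClique A I D)
    (hblock : ∀ a ∈ minL x, ¬ ∀ b ∈ D, I a b) : IsFNF A I (D :: R) (wB A I D * x) := by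
  refine ⟨⟨?_, ?_⟩, ?_⟩
  · intro B hB
    rcases List.mem_cons.mp hB with rfl | hB
    · exact hD
    · exact hx.1.1 B hB
  · intro i hi a ha
    match i, R with
    | 0, C :: R' =>
      have haC : a ∈ (↑C : Set A) := by simpa using ha
      have := hblock a (fnf_head_subset_minL (⟨hx.1, hx.2⟩ : IsFNF A I (C :: R') x) haC)
      push_neg at this
      obtain ⟨b, hb, hnb⟩ := this
      exact ⟨b, by simpa using hb, hnb⟩
    | i + 1, R =>
      have hi' : i + 1 < R.length := by simpa using hi
      have := hx.1.2 i hi' a (by simpa using ha)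
      obtain ⟨b, hb, hnb⟩ := this
      exact ⟨b, by simpa using hb, hnb⟩
  · rw [wProd_cons, ← hx.2]

lemma fnf_nil_one : IsFNF A I [] 1 := ⟨chain_nil, rfl⟩

lemma fnf_exists [Fintype A] (hsym : Symmetric I) (hirr : Irreflexive I)
    (x : TraceMonoid A I) : ∃ L, IsFNF A I L x := by
  generalize hn : tlen x = n
  induction n using Nat.strongRecOn generalizing x with
  | ind n ihn =>
  by_cases hx : x = 1
  · exact ⟨[], hx ▸ fnf_nil_one⟩
  · have hfin : (minL x).Finite := Set.toFinite _
    set D := hfin.toFinset with hDdef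
    have hDco : ↑D = minL x := hfin.coe_toFinset
    have hDne : D.Nonempty := by
      obtain ⟨a, ha⟩ := minL_nonempty hx
      exact ⟨a, by rw [← Finset.mem_coe, hDco]; exact ha⟩
    have hpair : ∀ u ∈ D, ∀ v ∈ D, u ≠ v → I u v := by
      intro u hu v hv huv
      exact minL_clique hsym hirr (hDco ▸ Finset.mem_coe.mpr hu : u ∈ minL x)
        (hDco ▸ Finset.mem_coe.mpr hv : v ∈ minL x) huv
    obtain ⟨x', hx'⟩ := clique_prefix hsym hirr D.card D x rfl (by rw [hDco])
    have hlen : tlen x' < n := by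
      have := congrArg tlen hx'
      rw [hn, tlen_mul, tlen_wB] at this
      have hc : 1 ≤ D.card := Finset.card_pos.mpr hDne
      omega
    obtain ⟨L', hL'⟩ := ihn (tlen x') hlen x' rfl
    refine ⟨D :: L', ?_⟩
    have hblock : ∀ a ∈ minL x', ¬ ∀ b ∈ D, I a b := by
      intro a ha hall
      have hcom : ∀ c ∈ content A I (wB A I D), I a c := by
        rw [content_wB]; exact fun c hc => hall c hc
      have : a ∈ minL x := by
        rw [hx']
        exact minL_mul_right ha hcom
      rw [← hDco] at this
      exact hirr a (hall a this)
    have := cons_fnf hL' ⟨hDne, hpair⟩ hblock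
    rwa [← hx'] at this

end TraceAux

namespace TraceAux

open FreeMonoid

variable {A : Type} {I : A → A → Prop}

lemma mem_of_getLast? {α : Type*} : ∀ {l : List α} {a : α}, l.getLast? = some a → a ∈ l := by
  intro l
  induction l with
  | nil => intro a h; simp at h
  | cons b l ih =>
    intro a h
    cases l with
    | nil =>
      simp only [List.getLast?_singleton, Option.some.injEq] at h
      simp [h]
    | cons c l' =>
      rw [List.getLast?_cons_cons] at h
      exact List.mem_cons_of_mem _ (ih h)

lemma length_pos_of_getLast? {α : Type*} {l : List α} {a : α} (h : l.getLast? = some a) :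
    0 < l.length := by
  cases l with
  | nil => simp at h
  | cons b l => simp

lemma getLast?_getElem {α : Type*} {l : List α} {a : α} (h : l.getLast? = some a)
    (hi : l.length - 1 < l.length) : l[l.length - 1] = a := by
  rw [List.getLast?_eq_getElem?, List.getElem?_eq_getElem hi] at h
  simpa using h

lemma blocked_tail {B : Finset A} {L : List (Finset A)} {s : TraceMonoid A I}
    (h : Blocked I (B :: L) s) : Blocked I L s := by
  intro B' hB'
  apply h
  cases L with
  | nil => simp at hB'
  | cons C L' => rw [List.getLast?_cons_cons]; exact hB'

section Phi

variable [Fintype A] {φ : Monoid.End (TraceMonoid A I)}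
variable (hsym : Symmetric I) (hirr : Irreflexive I)
variable (hcond : ∀ a b c : A,
    (∃ w : TraceMonoid A I, φ (traceOf A I b) = traceOf A I c * w) →
    (∀ x ∈ content A I (φ (traceOf A I a)), I c x) → I a b)

include hsym hirr hcond

lemma lemB_word : ∀ (l : List A) (c : A),
    c ∈ minL (φ (mk A I (ofList l))) →
    ∃ b ∈ minL (mk A I (ofList l)), c ∈ minL (φ (traceOf A I b)) := by
  intro l
  induction l with
  | nil =>
    intro c hc
    rw [ofList_nil, map_one, map_one, minL_one] at hc
    exact absurd hc (by simp)
  | cons b l ih =>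
    intro c hc
    rw [mk_cons, map_mul] at hc
    rcases minL_mul hsym hirr hc with h | ⟨h1, h2⟩
    · exact ⟨b, ⟨mk A I (ofList l), mk_cons b l⟩, h⟩
    · obtain ⟨b', hb', hcb'⟩ := ih c h1
      have hIbb' : I b b' := hcond b b' c hcb' h2
      refine ⟨b', ?_, hcb'⟩
      rw [mk_cons]
      exact minL_mul_right hb' (by rw [content_of]; rintro d rfl; exact hsym hIbb')

lemma lemB {x : TraceMonoid A I} {c : A} (hc : c ∈ minL (φ x)) :
    ∃ b ∈ minL x, c ∈ minL (φ (traceOf A I b)) := by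
  obtain ⟨w, rfl⟩ := Con.mk'_surjective (c := traceCon A I) x
  have hw : mk A I (ofList w.toList) = mk A I w := by rw [ofList_toList]
  rw [← hw] at hc ⊢
  exact lemB_word hsym hirr hcond w.toList c hc

lemma dead_step {b a : A} (hb : φ (traceOf A I b) = 1) (hna : ¬ I b a) :
    φ (traceOf A I a) = 1 := by
  by_contra h
  obtain ⟨c, y, hc⟩ := minL_nonempty h
  refine hna (hcond b a c ⟨y, hc⟩ ?_)
  rw [hb, content_one]
  simp

lemma dead_all : ∀ (n : ℕ) (x : TraceMonoid A I), tlen x = n →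
    (∀ a ∈ minL x, φ (traceOf A I a) = 1) → φ x = 1 := by
  intro n
  induction n using Nat.strongRecOn with
  | ind n ihn =>
  intro x hn hd
  by_cases hx : x = 1
  · rw [hx, map_one]
  · classical
    have hfin : (minL x).Finite := Set.toFinite _
    have hDco : ↑hfin.toFinset = minL x := hfin.coe_toFinset
    set D := hfin.toFinset with hDdef
    have hDne : D.Nonempty := by
      obtain ⟨a, ha⟩ := minL_nonempty hx
      exact ⟨a, by rw [← Finset.mem_coe, hDco]; exact ha⟩
    have hpair : ∀ u ∈ D, ∀ v ∈ D, u ≠ v → I u v := fun u hu v hv huv =>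
      minL_clique hsym hirr (hDco ▸ Finset.mem_coe.mpr hu : u ∈ minL x)
        (hDco ▸ Finset.mem_coe.mpr hv : v ∈ minL x) huv
    obtain ⟨x', hx'⟩ := clique_prefix hsym hirr D.card D x rfl (by rw [hDco])
    have hlen : tlen x' < n := by
      have := congrArg tlen hx'
      rw [hn, tlen_mul, tlen_wB] at this
      have hc : 1 ≤ D.card := Finset.card_pos.mpr hDne
      omega
    have hd' : ∀ a ∈ minL x', φ (traceOf A I a) = 1 := by
      intro a ha
      by_cases hall : ∀ b ∈ D, I a b
      · refine hd a ?_
        rw [hx']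
        exact minL_mul_right ha (by rw [content_wB]; exact hall)
      · push_neg at hall
        obtain ⟨b, hbD, hnb⟩ := hall
        have hbdead : φ (traceOf A I b) = 1 :=
          hd b (hDco ▸ Finset.mem_coe.mpr hbD)
        exact dead_step hsym hirr hcond hbdead (fun h => hnb (hsym h))
    have hx'1 : φ x' = 1 := ihn (tlen x') hlen x' rfl hd'
    have hwB1 : φ (wB A I D) = 1 := by
      rw [wB, map_list_prod]
      apply List.prod_eq_one
      intro y hy
      simp only [List.map_map, List.mem_map] at hy
      obtain ⟨a, haD, rfl⟩ := hy
      exact hd a (hDco ▸ Finset.mem_coe.mpr (Finset.mem_toList.mp haD))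
    rw [hx', map_mul, hx'1, hwB1, one_mul]

omit hsym hirr hcond in
lemma wB_dead {C : Finset A} (h : ∀ a ∈ C, φ (traceOf A I a) = 1) :
    φ (wB A I C) = 1 := by
  rw [wB, map_list_prod]
  apply List.prod_eq_one
  intro y hy
  simp only [List.map_map, List.mem_map] at hy
  obtain ⟨a, haC, rfl⟩ := hy
  exact h a (Finset.mem_toList.mp haC)

lemma chain_dead : ∀ (L' : List (Finset A)) (B : Finset A),
    IsFoataChain A I (B :: L') → (∀ a ∈ B, φ (traceOf A I a) = 1) →
    ∀ C ∈ B :: L', ∀ a ∈ C, φ (traceOf A I a) = 1 := by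
  intro L'
  induction L' with
  | nil =>
    intro B _ hd C hC a ha
    rw [List.mem_singleton] at hC
    subst hC
    exact hd a ha
  | cons C' L'' ih =>
    intro B hch hd C hC a ha
    have hd' : ∀ a' ∈ C', φ (traceOf A I a') = 1 := by
      intro a' ha'
      obtain ⟨b, hb, hnb⟩ := hch.2 0 (by simp) a' (by simpa using ha')
      exact dead_step hsym hirr hcond (hd b (by simpa using hb)) (fun h => hnb (hsym h))
    rcases List.mem_cons.mp hC with rfl | hC'
    · exact hd a ha
    · exact ih C' (chain_tail hch) hd' C hC' a ha

omit hsym hirr hcond in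
lemma wProd_dead {L : List (Finset A)} (h : ∀ C ∈ L, ∀ a ∈ C, φ (traceOf A I a) = 1) :
    φ (wProd A I L) = 1 := by
  induction L with
  | nil => rw [wProd_nil, map_one]
  | cons C L ih =>
    rw [wProd_cons, map_mul, ih (fun C' hC' => h C' (List.mem_cons_of_mem _ hC')),
      wB_dead (h C (List.mem_cons_self)), one_mul]

end Phi

end TraceAux

namespace TraceAux

open FreeMonoid

variable {A : Type} {I : A → A → Prop}

section Main

variable [Fintype A] {φ : Monoid.End (TraceMonoid A I)}
variable (hsym : Symmetric I) (hirr : Irreflexive I)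
variable (hcond : ∀ a b c : A,
    (∃ w : TraceMonoid A I, φ (traceOf A I b) = traceOf A I c * w) →
    (∀ x ∈ content A I (φ (traceOf A I a)), I c x) → I a b)

include hsym hirr hcond

lemma star : ∀ (Bs : List (Finset A)) (s t q : TraceMonoid A I),
    IsFoataChain A I Bs → Blocked I Bs s → Blocked I Bs t →
    (q * φ (wProd A I Bs * s) = q * φ (wProd A I Bs * t)) ∨
    (∃ P Ls Lt : List (Finset A), P.length = Bs.length ∧
      IsFNF A I (P ++ Ls) (q * φ (wProd A I Bs * s)) ∧
      IsFNF A I (P ++ Lt) (q * φ (wProd A I Bs * t))) := by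
  intro Bs
  induction Bs with
  | nil =>
    intro s t q _ _ _
    right
    obtain ⟨Ls, hLs⟩ := fnf_exists hsym hirr (q * φ (wProd A I [] * s))
    obtain ⟨Lt, hLt⟩ := fnf_exists hsym hirr (q * φ (wProd A I [] * t))
    exact ⟨[], Ls, Lt, rfl, by simpa using hLs, by simpa using hLt⟩
  | cons B Bs' ih =>
    intro s t q hch hbs hbt
    by_cases hdead : ∀ a ∈ B, φ (traceOf A I a) = 1
    · left
      have hAll : ∀ C ∈ B :: Bs', ∀ a ∈ C, φ (traceOf A I a) = 1 :=
        chain_dead hsym hirr hcond Bs' B hch hdead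
      have hw : φ (wProd A I (B :: Bs')) = 1 := wProd_dead hAll
      obtain ⟨Bl, hBl⟩ : ∃ Bl, (B :: Bs').getLast? = some Bl := by
        cases h : (B :: Bs').getLast? with
        | none => exact absurd (List.getLast?_eq_none_iff.mp h) (by simp)
        | some Bl => exact ⟨Bl, rfl⟩
      have hBlmem : Bl ∈ B :: Bs' := mem_of_getLast? hBl
      have hs1 : φ s = 1 := by
        refine dead_all hsym hirr hcond (tlen s) s rfl ?_
        intro a ha
        obtain ⟨b, hb, hnb⟩ := hbs Bl hBl a ha
        exact dead_step hsym hirr hcond (hAll Bl hBlmem b hb) (fun h => hnb (hsym h))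
      have ht1 : φ t = 1 := by
        refine dead_all hsym hirr hcond (tlen t) t rfl ?_
        intro a ha
        obtain ⟨b, hb, hnb⟩ := hbt Bl hBl a ha
        exact dead_step hsym hirr hcond (hAll Bl hBlmem b hb) (fun h => hnb (hsym h))
      rw [map_mul, map_mul, hw, hs1, ht1]
    · push_neg at hdead
      obtain ⟨a₀, ha₀, hphia₀⟩ := hdead
      classical
      have hcliqueB : IsClique A I B := hch.1 B (List.mem_cons_self)
      set Y := q * φ (wB A I B) with hY
      have hYne : Y ≠ 1 := by
        intro h
        have h1 : tlen Y = 0 := by rw [h, tlen_one]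
        rw [hY, tlen_mul] at h1
        have h2 : φ (wB A I B) = 1 := eq_one_of_tlen (by omega)
        have h3 := congrArg tlen (congrArg φ (congrArg (fun z => z) (wB_erase hcliqueB.2 ha₀)))
        simp only [map_mul] at h3
        rw [h2, tlen_one, tlen_mul] at h3
        exact hphia₀ (eq_one_of_tlen (by omega))
      have hfin : (minL Y).Finite := Set.toFinite _
      have hDco : ↑hfin.toFinset = minL Y := hfin.coe_toFinset
      set D := hfin.toFinset with hDdef
      have hDne : D.Nonempty := by
        obtain ⟨a, ha⟩ := minL_nonempty hYne
        exact ⟨a, by rw [← Finset.mem_coe, hDco]; exact ha⟩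
      have hDpair : ∀ u ∈ D, ∀ v ∈ D, u ≠ v → I u v := fun u hu v hv huv =>
        minL_clique hsym hirr (hDco ▸ Finset.mem_coe.mpr hu : u ∈ minL Y)
          (hDco ▸ Finset.mem_coe.mpr hv : v ∈ minL Y) huv
      obtain ⟨q₂, hq₂⟩ := clique_prefix hsym hirr D.card D Y rfl (by rw [hDco])
      -- key fact: the minimal letters of `Y * φ (wProd Bs' * r)` are exactly `D`,
      -- for any `r` blocked by the chain `B :: Bs'`.
      have key : ∀ r : TraceMonoid A I, Blocked I (B :: Bs') r →
          minL (Y * φ (wProd A I Bs' * r)) = ↑D := by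
        intro r hbr
        rw [hDco]
        apply Set.eq_of_subset_of_subset
        · intro c hc
          rcases minL_mul hsym hirr hc with h | ⟨h1, h2⟩
          · exact h
          · exfalso
            obtain ⟨b, hbmin, hcb⟩ := lemB hsym hirr hcond h1
            have hblkb : ∃ b' ∈ B, ¬ I b b' := by
              cases Bs' with
              | nil =>
                rw [wProd_nil, one_mul] at hbmin
                exact hbr B rfl b hbmin
              | cons C' Bs'' =>
                have hbC' : b ∈ (↑C' : Set A) := by
                  rw [← minL_chain_mul hsym hirr (C' :: Bs'') r C' Bs'' rfl
                    (chain_tail hch) (blocked_tail hbr)]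
                  exact hbmin
                obtain ⟨b', hb', hnb⟩ := hch.2 0 (by simp) b (by simpa using hbC')
                exact ⟨b', by simpa using hb', hnb⟩
            obtain ⟨b', hb'B, hnb⟩ := hblkb
            have hsubc : ∀ x ∈ content A I (φ (traceOf A I b')), I c x := by
              intro x hx
              apply h2
              have hsub : content A I (φ (traceOf A I b')) ⊆
                  content A I (φ (wB A I B)) := by
                rw [wB_erase hcliqueB.2 hb'B, map_mul, content_mul]
                exact Set.subset_union_left
              rw [hY, content_mul]
              exact Or.inr (hsub hx)
            exact hnb (hsym (hcond b' b c hcb hsubc))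
        · intro a ha
          exact minL_mul_left ha
      have hXs : q * φ (wProd A I (B :: Bs') * s) = Y * φ (wProd A I Bs' * s) := by
        rw [wProd_cons, mul_assoc, map_mul, ← mul_assoc, hY]
      have hXt : q * φ (wProd A I (B :: Bs') * t) = Y * φ (wProd A I Bs' * t) := by
        rw [wProd_cons, mul_assoc, map_mul, ← mul_assoc, hY]
      rcases ih s t q₂ (chain_tail hch) (blocked_tail hbs) (blocked_tail hbt) with
        heq | ⟨P₁, L₁, L₂, hlen, h1, h2⟩
      · left
        rw [hXs, hXt, hq₂, mul_assoc, mul_assoc, heq]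
      · right
        refine ⟨D :: P₁, L₁, L₂, by simp [hlen], ?_, ?_⟩
        · have hres : q * φ (wProd A I (B :: Bs') * s) =
              wB A I D * (q₂ * φ (wProd A I Bs' * s)) := by
            rw [hXs, hq₂, mul_assoc]
          have hblockD : ∀ a ∈ minL (q₂ * φ (wProd A I Bs' * s)), ¬ ∀ b ∈ D, I a b := by
            intro a ha hall
            have hmem : a ∈ minL (Y * φ (wProd A I Bs' * s)) := by
              rw [hq₂, mul_assoc]
              exact minL_mul_right ha (by rw [content_wB]; exact hall)
            rw [key s hbs] at hmem
            exact hirr a (hall a (Finset.mem_coe.mp hmem))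
          have := cons_fnf h1 ⟨hDne, hDpair⟩ hblockD
          rw [hres]
          exact this
        · have hres : q * φ (wProd A I (B :: Bs') * t) =
              wB A I D * (q₂ * φ (wProd A I Bs' * t)) := by
            rw [hXt, hq₂, mul_assoc]
          have hblockD : ∀ a ∈ minL (q₂ * φ (wProd A I Bs' * t)), ¬ ∀ b ∈ D, I a b := by
            intro a ha hall
            have hmem : a ∈ minL (Y * φ (wProd A I Bs' * t)) := by
              rw [hq₂, mul_assoc]
              exact minL_mul_right ha (by rw [content_wB]; exact hall)
            rw [key t hbt] at hmem
            exact hirr a (hall a (Finset.mem_coe.mp hmem))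
          have := cons_fnf h2 ⟨hDne, hDpair⟩ hblockD
          rw [hres]
          exact this

end Main

lemma blocked_of_append {P Lu : List (Finset A)} (hsym : Symmetric I) (hirr : Irreflexive I)
    (h : IsFoataChain A I (P ++ Lu)) : Blocked I P (wProd A I Lu) := by
  intro B hB a ha
  cases Lu with
  | nil => rw [wProd_nil, minL_one] at ha; exact absurd ha (by simp)
  | cons C Lu' =>
    have hchainLu : IsFoataChain A I (C :: Lu') := chain_of_append_right h
    have hmin : a ∈ (↑C : Set A) := by
      have := minL_chain_mul hsym hirr (C :: Lu') 1 C Lu' rfl hchainLu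
        (fun B' _ a' ha' => absurd (minL_one ▸ ha') (by simp))
      rw [mul_one] at this
      rw [← this]
      exact ha
    have hplen : 0 < P.length := length_pos_of_getLast? hB
    set i := P.length - 1 with hi
    have hiP : i < P.length := by omega
    have hi1 : i + 1 < (P ++ C :: Lu').length := by
      rw [List.length_append]
      simp only [List.length_cons]
      omega
    have e1 : (P ++ C :: Lu')[i + 1] = C := by
      have hieq : i + 1 = P.length := by omega
      rw [List.getElem_append_right (by omega)]
      simp [hieq]
    have e2 : (P ++ C :: Lu')[i]'(by omega) = B := by
      rw [List.getElem_append_left hiP]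
      exact getLast?_getElem hB hiP
    obtain ⟨b, hb, hnb⟩ := h.2 i hi1 a (by rw [e1]; exact hmin)
    rw [e2] at hb
    exact ⟨b, hb, hnb⟩

end TraceAux

open TraceAux in
/-- If an endomorphism `φ` of `M(A,I)` satisfies: for all letters `a,b,c`, `c` a prefix
of `φ(b)` and `c ∼_I φ(a)` imply `(a,b) ∈ I`, then `r(φ(u), φ(v)) ≥ r(u,v)` for all
`u, v`, where `r` measures the longest common prefix of Foata normal forms. -/
theorem r_apply_ge (A : Type) [Fintype A] (I : A → A → Prop)
    (hsym : Symmetric I) (hirr : Irreflexive I)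
    (φ : Monoid.End (TraceMonoid A I))
    (hcond : ∀ a b c : A, (∃ w : TraceMonoid A I, φ (traceOf A I b) = traceOf A I c * w) →
      (∀ x ∈ content A I (φ (traceOf A I a)), I c x) → I a b) :
    ∀ u v : TraceMonoid A I, rE A I u v ≤ rE A I (φ u) (φ v) := by
  intro u v
  by_cases huv : u = v
  · subst huv
    unfold rE
    rw [if_pos rfl, if_pos rfl]
  · unfold rE
    rw [if_neg huv]
    by_cases hphi : φ u = φ v
    · rw [if_pos hphi]
      exact le_top
    · rw [if_neg hphi, Nat.cast_le]
      unfold rNat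
      rcases Set.eq_empty_or_nonempty {k : ℕ | ∃ P Lu Lv : List (Finset A), P.length = k ∧
          IsFNF A I (P ++ Lu) u ∧ IsFNF A I (P ++ Lv) v} with hS | hS
      · rw [hS, csSup_empty]
        exact Nat.zero_le _
      · apply csSup_le hS
        rintro k ⟨P, Lu, Lv, hP, hu, hv⟩
        have hbdd : BddAbove {k : ℕ | ∃ P' L1 L2 : List (Finset A), P'.length = k ∧
            IsFNF A I (P' ++ L1) (φ u) ∧ IsFNF A I (P' ++ L2) (φ v)} := by
          refine ⟨tlen (φ u), ?_⟩
          rintro k' ⟨P', L1, L2, hP', h1, h2⟩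
          have hle := fnf_length_le h1
          rw [List.length_append] at hle
          omega
        refine le_csSup hbdd ?_
        have hchP : IsFoataChain A I P := chain_of_append_left hu.1
        have hbs := blocked_of_append hsym hirr hu.1
        have hbt := blocked_of_append hsym hirr hv.1
        rcases star hsym hirr hcond P (wProd A I Lu) (wProd A I Lv) 1 hchP hbs hbt with
          heq | ⟨P', L1, L2, hlen, h1, h2⟩
        · exfalso
          rw [one_mul, one_mul, ← wProd_append, ← wProd_append, ← hu.2, ← hv.2] at heq
          exact hphi heq
        · rw [one_mul, ← wProd_append, ← hu.2] at h1
          rw [one_mul, ← wProd_append, ← hv.2] at h2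
          exact ⟨P', L1, L2, by rw [hlen, hP], h1, h2⟩
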